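/- Let X and A be countable nonempty sets, let P : X × A × X → [0,1] with ∑_{x'} P(x, a, x') = 1 for all (x, a), let π : X × A → [0,1] with ∑_{a'} π(x', a') = 1 for all x', let r : X × A → ℝ, and let γ ∈ [0,1). For value distributions Z : X × A → (probability measures on ℝ), define the distributional Bellman operator (T^π Z)(x, a) = ∑_{x'} ∑_{a'} P(x, a, x')·π(x', a') · f_{x,a}#(Z(x', a')), where f_{x,a}#(μ) denotes the pushforward of μ under the map z ↦ r(x, a) + γ·z. Then for every p ∈ [1, ∞) and any two value distributions Z_1, Z_2 whose state-action distributions all have finite p-th moments, d̄_p(T^π Z_1, T^π Z_2) ≤ γ · d̄_p(Z_1, Z_2), where d̄_p(Z_1, Z_2) = sup_{x, a} W_p(Z_1(x, a), Z_2(x, a)); that is, T^π is a γ-contraction in the maximal p-Wasserstein metric. -/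

import Mathlib

open MeasureTheory Set
open scoped ENNReal

/-- The CDF of a measure on ℝ: `F(y) = μ((-∞, y])`. -/
noncomputable def cdfFn (μ : Measure ℝ) (y : ℝ) : ℝ := (μ (Iic y)).toReal

/-- The quantile function (generalized inverse CDF): `F⁻¹(ω) = inf {y | ω ≤ F(y)}`. -/
noncomputable def quantileFn (μ : Measure ℝ) (ω : ℝ) : ℝ := sInf {y : ℝ | ω ≤ cdfFn μ y}

/-- The p-Wasserstein distance `W_p(μ, ν) = (∫_0^1 |F_μ⁻¹(ω) - F_ν⁻¹(ω)|^p dω)^{1/p}`, valued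
in `ℝ≥0∞` so that suprema over infinitely many state-action pairs are well-defined. -/
noncomputable def WpE (p : ℝ) (μ ν : Measure ℝ) : ℝ≥0∞ :=
  (∫⁻ ω in Set.Ioo (0:ℝ) 1, ENNReal.ofReal (|quantileFn μ ω - quantileFn ν ω| ^ p)) ^ (1 / p)

/-- The distributional Bellman operator: `(T^π Z)(x,a)` is the mixture over next state-action
pairs `(x',a')`, weighted by `P(x,a,x') π(x',a')`, of the pushforward of `Z(x',a')` under
`z ↦ r(x,a) + γ z`. -/
noncomputable def distBellman {X A : Type*} [Countable X] [Countable A]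
    (P : X → A → X → ℝ) (π : X → A → ℝ) (r : X → A → ℝ) (γ : ℝ)
    (Z : X × A → Measure ℝ) : X × A → Measure ℝ :=
  fun q => Measure.sum fun x' : X => Measure.sum fun a' : A =>
    ENNReal.ofReal (P q.1 q.2 x' * π x' a') •
      Measure.map (fun z : ℝ => r q.1 q.2 + γ * z) (Z (x', a'))

open Classical in
noncomputable def eind (P : Prop) : ℝ≥0∞ := if P then 1 else 0

noncomputable def kern (p s t : ℝ) : ℝ≥0∞ :=
  if s < t then ENNReal.ofReal ((t - s) ^ (p - 2)) else 0

noncomputable def Phi (μ ν : Measure ℝ) (s t : ℝ) : ℝ≥0∞ :=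
  (μ (Iic s) - ν (Iic t)) + (ν (Iic s) - μ (Iic t))

namespace WassAux

lemma measurable_cdfE (μ : Measure ℝ) : Measurable fun s : ℝ => μ (Iic s) :=
  Monotone.measurable (fun a b hab => measure_mono (Iic_subset_Iic.2 hab))

lemma mem_S_iff (μ : Measure ℝ) [IsProbabilityMeasure μ] (ω y : ℝ) :
    ω ≤ cdfFn μ y ↔ ENNReal.ofReal ω ≤ μ (Iic y) := by
  rw [cdfFn, ENNReal.ofReal_le_iff_le_toReal (measure_ne_top μ _)]

lemma exists_upper (μ : Measure ℝ) [IsProbabilityMeasure μ] {ω : ℝ} (h1 : ω < 1) :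
    ∃ y : ℝ, ENNReal.ofReal ω ≤ μ (Iic y) := by
  have ht := tendsto_measure_Iic_atTop (μ := μ)
  rw [measure_univ] at ht
  have hlt : ENNReal.ofReal ω < 1 := ENNReal.ofReal_lt_one.2 h1
  obtain ⟨y, hy⟩ := (ht.eventually (eventually_gt_nhds hlt)).exists
  exact ⟨y, hy.le⟩

lemma exists_lower (μ : Measure ℝ) [IsProbabilityMeasure μ] {ω : ℝ} (h0 : 0 < ω) :
    ∃ y : ℝ, μ (Iic y) < ENNReal.ofReal ω := by
  have hI : ⋂ x : ℝ, Iic x = (∅ : Set ℝ) := by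
    ext z
    simp only [mem_iInter, mem_Iic, mem_empty_iff_false, iff_false, not_forall, not_le]
    exact ⟨z - 1, by linarith⟩
  have ht : Filter.Tendsto (fun x : ℝ => μ (Iic x)) Filter.atBot (nhds 0) := by
    have := tendsto_measure_iInter_atBot (μ := μ)
      (s := fun x : ℝ => Iic x)
      (fun x => measurableSet_Iic.nullMeasurableSet)
      (fun a b hab => Iic_subset_Iic.2 hab) ⟨0, measure_ne_top μ _⟩
    rwa [hI, measure_empty] at this
  have hlt : (0 : ℝ≥0∞) < ENNReal.ofReal ω := ENNReal.ofReal_pos.2 h0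
  obtain ⟨y, hy⟩ := (ht.eventually (eventually_lt_nhds hlt)).exists
  exact ⟨y, hy⟩

lemma S_nonempty (μ : Measure ℝ) [IsProbabilityMeasure μ] {ω : ℝ} (h1 : ω < 1) :
    {y : ℝ | ω ≤ cdfFn μ y}.Nonempty := by
  obtain ⟨y, hy⟩ := exists_upper μ h1
  exact ⟨y, (mem_S_iff μ ω y).2 hy⟩

lemma S_bddBelow (μ : Measure ℝ) [IsProbabilityMeasure μ] {ω : ℝ} (h0 : 0 < ω) :
    BddBelow {y : ℝ | ω ≤ cdfFn μ y} := by
  obtain ⟨y₀, hy₀⟩ := exists_lower μ h0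
  refine ⟨y₀, fun y hy => ?_⟩
  by_contra hlt
  push_neg at hlt
  have h1 : ENNReal.ofReal ω ≤ μ (Iic y) := (mem_S_iff μ ω y).1 hy
  have h2 : μ (Iic y) ≤ μ (Iic y₀) := measure_mono (Iic_subset_Iic.2 hlt.le)
  exact absurd (h1.trans h2) (not_le.2 hy₀)

lemma quantile_mem_S (μ : Measure ℝ) [IsProbabilityMeasure μ] {ω : ℝ}
    (h0 : 0 < ω) (h1 : ω < 1) :
    ENNReal.ofReal ω ≤ μ (Iic (quantileFn μ ω)) := by
  set S := {y : ℝ | ω ≤ cdfFn μ y} with hS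
  have hne := S_nonempty μ h1
  have hbdd := S_bddBelow μ (ω := ω) h0
  set q := sInf S with hq
  have key : ∀ n : ℕ, ENNReal.ofReal ω ≤ μ (Iic (q + 1 / (n + 1))) := by
    intro n
    have hpos : (0 : ℝ) < 1 / (n + 1) := by positivity
    have : q < q + 1 / (n + 1) := by linarith
    obtain ⟨y, hyS, hyl⟩ := (csInf_lt_iff hbdd hne).1 this
    exact le_trans ((mem_S_iff μ ω y).1 hyS) (measure_mono (Iic_subset_Iic.2 hyl.le))
  have hiter : ⋂ n : ℕ, Iic (q + 1 / (n + 1 : ℝ)) = Iic q := by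
    ext z
    simp only [mem_iInter, mem_Iic]
    constructor
    · intro h
      have hlim : Filter.Tendsto (fun n : ℕ => q + 1 / (n + 1 : ℝ)) Filter.atTop (nhds q) := by
        have := tendsto_one_div_add_atTop_nhds_zero_nat (𝕜 := ℝ)
        simpa using (tendsto_const_nhds (x := q)).add this
      exact ge_of_tendsto hlim (Filter.Eventually.of_forall h)
    · intro h n
      have hpos : (0 : ℝ) < 1 / (n + 1) := by positivity
      linarith
  have ht : Filter.Tendsto (fun n : ℕ => μ (Iic (q + 1 / (n + 1 : ℝ)))) Filter.atTop
      (nhds (μ (Iic q))) := by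
    have := tendsto_measure_iInter_atTop (μ := μ)
      (s := fun n : ℕ => Iic (q + 1 / (n + 1 : ℝ)))
      (fun n => measurableSet_Iic.nullMeasurableSet)
      (fun a b hab => Iic_subset_Iic.2 (by
        have : (1 : ℝ) / (b + 1) ≤ 1 / (a + 1) := by
          apply one_div_le_one_div_of_le (by positivity)
          exact_mod_cast by exact_mod_cast add_le_add_left (Nat.cast_le.2 hab) 1
        linarith)) ⟨0, measure_ne_top μ _⟩
    rwa [hiter] at this
  exact ge_of_tendsto ht (Filter.Eventually.of_forall key)

lemma quantileFn_le_iff (μ : Measure ℝ) [IsProbabilityMeasure μ] {ω : ℝ}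
    (h0 : 0 < ω) (h1 : ω < 1) (s : ℝ) :
    quantileFn μ ω ≤ s ↔ ENNReal.ofReal ω ≤ μ (Iic s) := by
  constructor
  · intro h
    exact le_trans (quantile_mem_S μ h0 h1) (measure_mono (Iic_subset_Iic.2 h))
  · intro h
    exact csInf_le (S_bddBelow μ h0) ((mem_S_iff μ ω s).2 h)

lemma lt_quantileFn_iff (μ : Measure ℝ) [IsProbabilityMeasure μ] {ω : ℝ}
    (h0 : 0 < ω) (h1 : ω < 1) (t : ℝ) :
    t < quantileFn μ ω ↔ μ (Iic t) < ENNReal.ofReal ω := by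
  rw [← not_le, quantileFn_le_iff μ h0 h1, not_le]





lemma eind_congr {P Q : Prop} (h : P ↔ Q) : eind P = eind Q := by
  exact congrArg eind (propext h)

lemma eind_true {P : Prop} (h : P) : eind P = 1 := by unfold eind; simp [h]
lemma eind_false {P : Prop} (h : ¬ P) : eind P = 0 := by unfold eind; simp [h]

lemma lintegral_eind_pair (μ ν : Measure ℝ) [IsProbabilityMeasure μ] [IsProbabilityMeasure ν]
    (s t : ℝ) :
    ∫⁻ ω in Ioo (0:ℝ) 1,
      eind (ENNReal.ofReal ω ≤ μ (Iic s)) * eind (ν (Iic t) < ENNReal.ofReal ω)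
      = μ (Iic s) - ν (Iic t) := by
  set Fs := (μ (Iic s)).toReal with hFs
  set Gt := (ν (Iic t)).toReal with hGt
  have hμfin : μ (Iic s) ≠ ∞ := measure_ne_top μ _
  have hνfin : ν (Iic t) ≠ ∞ := measure_ne_top ν _
  have hGt0 : 0 ≤ Gt := ENNReal.toReal_nonneg
  have hFs1 : Fs ≤ 1 := by
    have h1 : μ (Iic s) ≤ 1 := prob_le_one
    calc Fs ≤ (1 : ℝ≥0∞).toReal := ENNReal.toReal_mono (by simp) h1
    _ = 1 := by simp
  have hcong : ∀ ω ∈ Ioo (0:ℝ) 1,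
      eind (ENNReal.ofReal ω ≤ μ (Iic s)) * eind (ν (Iic t) < ENNReal.ofReal ω)
        = (Ioc Gt Fs).indicator (fun _ => (1 : ℝ≥0∞)) ω := by
    intro ω hω
    have h1 : ENNReal.ofReal ω ≤ μ (Iic s) ↔ ω ≤ Fs :=
      ENNReal.ofReal_le_iff_le_toReal hμfin
    have h2 : ν (Iic t) < ENNReal.ofReal ω ↔ Gt < ω :=
      ENNReal.lt_ofReal_iff_toReal_lt hνfin
    by_cases hP : ω ≤ Fs <;> by_cases hQ : Gt < ω
    · rw [eind_true (h1.2 hP), eind_true (h2.2 hQ), Set.indicator_of_mem (show ω ∈ Ioc Gt Fs from ⟨hQ, hP⟩) (fun _ => (1:ℝ≥0∞))]; simp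
    · rw [eind_false (fun h => hQ (h2.1 h))]
      rw [indicator_of_notMem (fun hmem => hQ hmem.1)]; simp
    · rw [eind_false (fun h => hP (h1.1 h))]
      rw [indicator_of_notMem (fun hmem => hP hmem.2)]; simp
    · rw [eind_false (fun h => hP (h1.1 h))]
      rw [indicator_of_notMem (fun hmem => hP hmem.2)]; simp
  rw [setLIntegral_congr_fun measurableSet_Ioo hcong]
  rw [lintegral_indicator measurableSet_Ioc, Measure.restrict_restrict measurableSet_Ioc]
  rw [setLIntegral_one]
  have hvol : volume (Ioc Gt Fs ∩ Ioo (0:ℝ) 1) = ENNReal.ofReal (Fs - Gt) := by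
    apply le_antisymm
    · calc volume (Ioc Gt Fs ∩ Ioo (0:ℝ) 1) ≤ volume (Ioc Gt Fs) :=
        measure_mono inter_subset_left
      _ = ENNReal.ofReal (Fs - Gt) := Real.volume_Ioc
    · calc ENNReal.ofReal (Fs - Gt) = volume (Ioo Gt Fs) := Real.volume_Ioo.symm
      _ ≤ volume (Ioc Gt Fs ∩ Ioo (0:ℝ) 1) := by
          apply measure_mono
          intro x hx
          exact ⟨⟨hx.1, hx.2.le⟩, ⟨lt_of_le_of_lt hGt0 hx.1, lt_of_lt_of_le hx.2 hFs1⟩⟩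
  rw [hvol, ENNReal.ofReal_sub _ hGt0, hFs, hGt,
    ENNReal.ofReal_toReal hμfin, ENNReal.ofReal_toReal hνfin]




lemma inner_int {p : ℝ} (hp : 1 < p) (s b : ℝ) :
    ∫⁻ t, kern p s t * eind (t < b)
      = if s < b then ENNReal.ofReal ((b - s) ^ (p - 1) / (p - 1)) else 0 := by
  have hpt : ∀ t : ℝ, kern p s t * eind (t < b)
      = (Ioo s b).indicator (fun t => ENNReal.ofReal ((t - s) ^ (p - 2))) t := by
    intro t
    by_cases h1 : s < t <;> by_cases h2 : t < b
    · rw [Set.indicator_of_mem (show t ∈ Ioo s b from ⟨h1, h2⟩)]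
      rw [eind_true h2]; simp [kern, h1]
    · rw [eind_false h2, Set.indicator_of_notMem (fun hm => h2 hm.2)]; simp
    · rw [Set.indicator_of_notMem (fun hm => h1 hm.1)]; simp [kern, h1]
    · rw [Set.indicator_of_notMem (fun hm => h1 hm.1), eind_false h2]; simp
  rw [lintegral_congr hpt, lintegral_indicator measurableSet_Ioo]
  by_cases hsb : s < b
  · rw [if_pos hsb]
    have hInt : IntegrableOn (fun t : ℝ => (t - s) ^ (p - 2)) (Ioo s b) volume := by
      have h1 : IntervalIntegrable (fun x : ℝ => x ^ (p - 2)) volume 0 (b - s) :=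
        intervalIntegral.intervalIntegrable_rpow' (by linarith)
      have h2 := h1.comp_sub_right s
      rw [zero_add, sub_add_cancel] at h2
      exact (intervalIntegrable_iff_integrableOn_Ioo_of_le hsb.le).1 h2
    have hnn : 0 ≤ᵐ[volume.restrict (Ioo s b)] fun t : ℝ => (t - s) ^ (p - 2) := by
      refine (ae_restrict_iff' measurableSet_Ioo).2 (Filter.Eventually.of_forall ?_)
      intro t ht
      exact Real.rpow_nonneg (by linarith [ht.1]) _
    rw [← ofReal_integral_eq_lintegral_ofReal hInt hnn]
    congr 1
    rw [← integral_Ioc_eq_integral_Ioo, ← intervalIntegral.integral_of_le hsb.le]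
    rw [intervalIntegral.integral_comp_sub_right (fun x : ℝ => x ^ (p - 2)) s, sub_self]
    rw [integral_rpow (Or.inl (by linarith))]
    rw [Real.zero_rpow (by linarith), sub_zero]
    ring_nf
  · rw [if_neg hsb]
    have : Ioo s b = (∅ : Set ℝ) := Ioo_eq_empty hsb
    rw [this]
    simp

lemma J_zero {p : ℝ} (a b : ℝ) (hba : b ≤ a) :
    ∫⁻ s, (∫⁻ t, kern p s t * (eind (a ≤ s) * eind (t < b))) = 0 := by
  have h : ∀ s : ℝ, (∫⁻ t, kern p s t * (eind (a ≤ s) * eind (t < b))) = 0 := by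
    intro s
    by_cases has : a ≤ s
    · have : ∀ t : ℝ, kern p s t * (eind (a ≤ s) * eind (t < b)) = 0 := by
        intro t
        by_cases htb : t < b
        · have : ¬ s < t := by push_neg; linarith
          simp [kern, this]
        · rw [eind_false htb]; simp
      rw [lintegral_congr this, lintegral_zero]
    · have : ∀ t : ℝ, kern p s t * (eind (a ≤ s) * eind (t < b)) = 0 := by
        intro t; rw [eind_false has]; simp
      rw [lintegral_congr this, lintegral_zero]
  rw [lintegral_congr h, lintegral_zero]

lemma J_eq {p : ℝ} (hp : 1 < p) (a b : ℝ) (hab : a ≤ b) :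
    ∫⁻ s, (∫⁻ t, kern p s t * (eind (a ≤ s) * eind (t < b)))
      = ENNReal.ofReal ((b - a) ^ p / (p * (p - 1))) := by
  have hstep : ∀ s : ℝ, (∫⁻ t, kern p s t * (eind (a ≤ s) * eind (t < b)))
      = (Ico a b).indicator (fun s => ENNReal.ofReal ((b - s) ^ (p - 1) / (p - 1))) s := by
    intro s
    have hcomm : ∀ t : ℝ, kern p s t * (eind (a ≤ s) * eind (t < b))
        = eind (a ≤ s) * (kern p s t * eind (t < b)) := fun t => by ring
    rw [lintegral_congr hcomm, lintegral_const_mul' _ _ (by unfold eind; split <;> simp)]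
    rw [inner_int hp s b]
    by_cases has : a ≤ s <;> by_cases hsb : s < b
    · rw [eind_true has, Set.indicator_of_mem (show s ∈ Ico a b from ⟨has, hsb⟩), if_pos hsb,
        one_mul]
    · rw [if_neg hsb, Set.indicator_of_notMem (fun hm => hsb hm.2), mul_zero]
    · rw [eind_false has, Set.indicator_of_notMem (fun hm => has hm.1), zero_mul]
    · rw [eind_false has, Set.indicator_of_notMem (fun hm => has hm.1), zero_mul]
  rw [lintegral_congr hstep, lintegral_indicator measurableSet_Ico]
  rw [setLIntegral_congr (Ioo_ae_eq_Ico (a := a) (b := b)).symm]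
  have hInt : IntegrableOn (fun s : ℝ => (b - s) ^ (p - 1) / (p - 1)) (Ioo a b) volume := by
    have h1 : IntervalIntegrable (fun x : ℝ => x ^ (p - 1)) volume 0 (b - a) :=
      intervalIntegral.intervalIntegrable_rpow' (by linarith)
    have h2 := h1.comp_sub_left b
    rw [sub_zero, sub_sub_cancel] at h2
    exact (((intervalIntegrable_iff_integrableOn_Ioo_of_le hab).1 h2.symm).div_const _)
  have hnn : 0 ≤ᵐ[volume.restrict (Ioo a b)] fun s : ℝ => (b - s) ^ (p - 1) / (p - 1) := by
    refine (ae_restrict_iff' measurableSet_Ioo).2 (Filter.Eventually.of_forall ?_)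
    intro s hs
    have := Real.rpow_nonneg (show (0:ℝ) ≤ b - s by linarith [hs.2]) (p - 1)
    exact div_nonneg this (by linarith)
  rw [← ofReal_integral_eq_lintegral_ofReal hInt hnn]
  congr 1
  rw [integral_div, ← integral_Ioc_eq_integral_Ioo, ← intervalIntegral.integral_of_le hab]
  rw [intervalIntegral.integral_comp_sub_left (fun x : ℝ => x ^ (p - 1)) b, sub_self]
  rw [integral_rpow (Or.inl (by linarith))]
  have hpe : p - 1 + 1 = p := by ring
  rw [hpe, Real.zero_rpow (by linarith), sub_zero]
  field_simp




lemma eind_ne_top (P : Prop) : eind P ≠ ∞ := by unfold eind; split <;> simp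

lemma measurable_eind {α : Type*} [MeasurableSpace α] {P : α → Prop}
    (h : MeasurableSet {x | P x}) : Measurable fun x => eind (P x) := by
  have heq : (fun x => eind (P x)) = {x | P x}.indicator (fun _ => (1:ℝ≥0∞)) := by
    funext x
    by_cases hx : P x
    · rw [eind_true hx, Set.indicator_of_mem (show x ∈ {x | P x} from hx)]
    · rw [eind_false hx, Set.indicator_of_notMem (show x ∉ {x | P x} from hx)]
  rw [heq]
  exact measurable_const.indicator h

lemma kern_ne_top (p s t : ℝ) : kern p s t ≠ ∞ := by unfold kern; split <;> simp

lemma measurable_kern (p : ℝ) : Measurable fun st : ℝ × ℝ => kern p st.1 st.2 := by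
  unfold kern
  apply Measurable.ite (measurableSet_lt measurable_fst measurable_snd)
  · apply ENNReal.measurable_ofReal.comp
    fun_prop
  · exact measurable_const




lemma measurable_inner_prod {p : ℝ} (a b : ℝ) :
    Measurable fun st : ℝ × ℝ => kern p st.1 st.2 * (eind (a ≤ st.1) * eind (st.2 < b)) := by
  apply (measurable_kern p).mul
  apply Measurable.mul
  · exact measurable_eind (measurableSet_le measurable_const measurable_fst)
  · exact measurable_eind (measurableSet_lt measurable_snd measurable_const)

lemma pointwise_pow {p : ℝ} (hp : 1 < p) (a b : ℝ) :
    ENNReal.ofReal (|a - b| ^ p) = ENNReal.ofReal (p * (p - 1)) *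
      ∫⁻ s, ∫⁻ t, kern p s t *
        (eind (a ≤ s) * eind (t < b) + eind (b ≤ s) * eind (t < a)) := by
  have hsplit : (∫⁻ s, ∫⁻ t, kern p s t *
        (eind (a ≤ s) * eind (t < b) + eind (b ≤ s) * eind (t < a)))
      = (∫⁻ s, ∫⁻ t, kern p s t * (eind (a ≤ s) * eind (t < b)))
        + ∫⁻ s, ∫⁻ t, kern p s t * (eind (b ≤ s) * eind (t < a)) := by
    have hin : ∀ s : ℝ, (∫⁻ t, kern p s t *
          (eind (a ≤ s) * eind (t < b) + eind (b ≤ s) * eind (t < a)))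
        = (∫⁻ t, kern p s t * (eind (a ≤ s) * eind (t < b)))
          + ∫⁻ t, kern p s t * (eind (b ≤ s) * eind (t < a)) := by
      intro s
      rw [← lintegral_add_left]
      · apply lintegral_congr; intro t; ring
      · exact (measurable_inner_prod a b).comp (measurable_const.prodMk measurable_id)
    rw [lintegral_congr hin]
    rw [← lintegral_add_left]
    exact (measurable_inner_prod a b).lintegral_prod_right'
  rw [hsplit]
  rcases le_total a b with hab | hba
  · rw [J_eq hp a b hab, J_zero b a hab, add_zero, ← ENNReal.ofReal_mul (by nlinarith)]
    congr 1
    rw [abs_of_nonpos (by linarith), neg_sub,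
      mul_div_cancel₀ _ (show p * (p - 1) ≠ 0 by nlinarith)]
  · rw [J_eq hp b a hba, J_zero a b hba, zero_add, ← ENNReal.ofReal_mul (by nlinarith)]
    congr 1
    rw [abs_of_nonneg (by linarith),
      mul_div_cancel₀ _ (show p * (p - 1) ≠ 0 by nlinarith)]

lemma J1_eq (a b : ℝ) :
    ∫⁻ s, eind (a ≤ s) * eind (s < b) = ENNReal.ofReal (b - a) := by
  have hpt : ∀ s : ℝ, eind (a ≤ s) * eind (s < b)
      = (Ico a b).indicator (fun _ => (1:ℝ≥0∞)) s := by
    intro s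
    by_cases h1 : a ≤ s <;> by_cases h2 : s < b
    · rw [eind_true h1, eind_true h2, Set.indicator_of_mem (show s ∈ Ico a b from ⟨h1, h2⟩)]
      simp
    · rw [eind_false h2, Set.indicator_of_notMem (fun hm => h2 hm.2)]; simp
    · rw [eind_false h1, Set.indicator_of_notMem (fun hm => h1 hm.1)]; simp
    · rw [eind_false h1, Set.indicator_of_notMem (fun hm => h1 hm.1)]; simp
  rw [lintegral_congr hpt, lintegral_indicator measurableSet_Ico, setLIntegral_one,
    Real.volume_Ico]

lemma pointwise_one (a b : ℝ) :
    ENNReal.ofReal |a - b| =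
      ∫⁻ s, (eind (a ≤ s) * eind (s < b) + eind (b ≤ s) * eind (s < a)) := by
  rw [lintegral_add_left]
  · rw [J1_eq a b, J1_eq b a]
    rcases le_total a b with hab | hba
    · have h0 : ENNReal.ofReal (a - b) = 0 := ENNReal.ofReal_eq_zero.2 (by linarith)
      rw [h0, add_zero, abs_of_nonpos (show a - b ≤ 0 by linarith), neg_sub]
    · have h0 : ENNReal.ofReal (b - a) = 0 := ENNReal.ofReal_eq_zero.2 (by linarith)
      rw [h0, zero_add, abs_of_nonneg (show (0:ℝ) ≤ a - b by linarith)]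
  · apply Measurable.mul
    · exact measurable_eind (measurableSet_le measurable_const measurable_id)
    · exact measurable_eind (measurableSet_lt measurable_id measurable_const)

section Master

variable (μ ν : Measure ℝ) [IsProbabilityMeasure μ] [IsProbabilityMeasure ν]

lemma measurable_G (p : ℝ) : Measurable fun v : ℝ × ℝ × ℝ =>
    kern p v.2.1 v.2.2 *
      (eind (ENNReal.ofReal v.1 ≤ μ (Iic v.2.1)) * eind (ν (Iic v.2.2) < ENNReal.ofReal v.1)
        + eind (ENNReal.ofReal v.1 ≤ ν (Iic v.2.1)) * eind (μ (Iic v.2.2) < ENNReal.ofReal v.1)) := by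
  apply Measurable.mul
  · exact (measurable_kern p).comp measurable_snd
  · apply Measurable.add <;> apply Measurable.mul
    · exact measurable_eind (measurableSet_le (ENNReal.measurable_ofReal.comp measurable_fst)
        ((measurable_cdfE μ).comp (measurable_snd.fst)))
    · exact measurable_eind (measurableSet_lt ((measurable_cdfE ν).comp measurable_snd.snd)
        (ENNReal.measurable_ofReal.comp measurable_fst))
    · exact measurable_eind (measurableSet_le (ENNReal.measurable_ofReal.comp measurable_fst)
        ((measurable_cdfE ν).comp (measurable_snd.fst)))
    · exact measurable_eind (measurableSet_lt ((measurable_cdfE μ).comp measurable_snd.snd)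
        (ENNReal.measurable_ofReal.comp measurable_fst))

lemma lintegral_omega_pair (s t : ℝ) :
    ∫⁻ ω in Ioo (0:ℝ) 1,
      (eind (ENNReal.ofReal ω ≤ μ (Iic s)) * eind (ν (Iic t) < ENNReal.ofReal ω)
        + eind (ENNReal.ofReal ω ≤ ν (Iic s)) * eind (μ (Iic t) < ENNReal.ofReal ω))
      = Phi μ ν s t := by
  rw [lintegral_add_left]
  · rw [lintegral_eind_pair μ ν s t, lintegral_eind_pair ν μ s t, Phi]
  · apply Measurable.mul
    · exact measurable_eind (measurableSet_le ENNReal.measurable_ofReal measurable_const)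
    · exact measurable_eind (measurableSet_lt measurable_const ENNReal.measurable_ofReal)

lemma master_gt {p : ℝ} (hp : 1 < p) :
    ∫⁻ ω in Ioo (0:ℝ) 1, ENNReal.ofReal (|quantileFn μ ω - quantileFn ν ω| ^ p)
      = ENNReal.ofReal (p * (p - 1)) * ∫⁻ s, ∫⁻ t, kern p s t * Phi μ ν s t := by
  have hcong : ∀ ω ∈ Ioo (0:ℝ) 1,
      ENNReal.ofReal (|quantileFn μ ω - quantileFn ν ω| ^ p)
        = ENNReal.ofReal (p * (p - 1)) * ∫⁻ s, ∫⁻ t, kern p s t *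
            (eind (ENNReal.ofReal ω ≤ μ (Iic s)) * eind (ν (Iic t) < ENNReal.ofReal ω)
              + eind (ENNReal.ofReal ω ≤ ν (Iic s)) * eind (μ (Iic t) < ENNReal.ofReal ω)) := by
    intro ω hω
    rw [pointwise_pow hp (quantileFn μ ω) (quantileFn ν ω)]
    congr 1
    apply lintegral_congr; intro s
    apply lintegral_congr; intro t
    rw [eind_congr (quantileFn_le_iff μ hω.1 hω.2 s),
      eind_congr (lt_quantileFn_iff ν hω.1 hω.2 t),
      eind_congr (quantileFn_le_iff ν hω.1 hω.2 s),
      eind_congr (lt_quantileFn_iff μ hω.1 hω.2 t)]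
  rw [setLIntegral_congr_fun measurableSet_Ioo hcong]
  rw [lintegral_const_mul' _ _ ENNReal.ofReal_ne_top]
  congr 1
  -- now swap the ω-integral inside
  have m1 : AEMeasurable (fun z : ℝ × ℝ => ∫⁻ t, kern p z.2 t *
      (eind (ENNReal.ofReal z.1 ≤ μ (Iic z.2)) * eind (ν (Iic t) < ENNReal.ofReal z.1)
        + eind (ENNReal.ofReal z.1 ≤ ν (Iic z.2)) * eind (μ (Iic t) < ENNReal.ofReal z.1)))
      ((volume.restrict (Ioo (0:ℝ) 1)).prod volume) := by
    apply Measurable.aemeasurable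
    apply Measurable.lintegral_prod_right'
      (f := fun w : (ℝ × ℝ) × ℝ => kern p w.1.2 w.2 *
        (eind (ENNReal.ofReal w.1.1 ≤ μ (Iic w.1.2)) * eind (ν (Iic w.2) < ENNReal.ofReal w.1.1)
          + eind (ENNReal.ofReal w.1.1 ≤ ν (Iic w.1.2)) * eind (μ (Iic w.2) < ENNReal.ofReal w.1.1)))
    exact (measurable_G μ ν p).comp
      ((measurable_fst.fst).prodMk ((measurable_fst.snd).prodMk measurable_snd))
  rw [lintegral_lintegral_swap m1]
  apply lintegral_congr; intro s
  have m2 : AEMeasurable (fun z : ℝ × ℝ => kern p s z.2 *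
      (eind (ENNReal.ofReal z.1 ≤ μ (Iic s)) * eind (ν (Iic z.2) < ENNReal.ofReal z.1)
        + eind (ENNReal.ofReal z.1 ≤ ν (Iic s)) * eind (μ (Iic z.2) < ENNReal.ofReal z.1)))
      ((volume.restrict (Ioo (0:ℝ) 1)).prod volume) := by
    apply Measurable.aemeasurable
    exact (measurable_G μ ν p).comp
      (measurable_fst.prodMk (measurable_const.prodMk measurable_snd))
  rw [lintegral_lintegral_swap m2]
  apply lintegral_congr; intro t
  rw [lintegral_const_mul' _ _ (kern_ne_top p s t), lintegral_omega_pair μ ν s t]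

lemma master_one :
    ∫⁻ ω in Ioo (0:ℝ) 1, ENNReal.ofReal |quantileFn μ ω - quantileFn ν ω|
      = ∫⁻ s, Phi μ ν s s := by
  have hcong : ∀ ω ∈ Ioo (0:ℝ) 1,
      ENNReal.ofReal |quantileFn μ ω - quantileFn ν ω|
        = ∫⁻ s, (eind (ENNReal.ofReal ω ≤ μ (Iic s)) * eind (ν (Iic s) < ENNReal.ofReal ω)
            + eind (ENNReal.ofReal ω ≤ ν (Iic s)) * eind (μ (Iic s) < ENNReal.ofReal ω)) := by
    intro ω hω
    rw [pointwise_one (quantileFn μ ω) (quantileFn ν ω)]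
    apply lintegral_congr; intro s
    rw [eind_congr (quantileFn_le_iff μ hω.1 hω.2 s),
      eind_congr (lt_quantileFn_iff ν hω.1 hω.2 s),
      eind_congr (quantileFn_le_iff ν hω.1 hω.2 s),
      eind_congr (lt_quantileFn_iff μ hω.1 hω.2 s)]
  rw [setLIntegral_congr_fun measurableSet_Ioo hcong]
  have m1 : AEMeasurable (fun z : ℝ × ℝ =>
      eind (ENNReal.ofReal z.1 ≤ μ (Iic z.2)) * eind (ν (Iic z.2) < ENNReal.ofReal z.1)
        + eind (ENNReal.ofReal z.1 ≤ ν (Iic z.2)) * eind (μ (Iic z.2) < ENNReal.ofReal z.1))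
      ((volume.restrict (Ioo (0:ℝ) 1)).prod volume) := by
    apply Measurable.aemeasurable
    apply Measurable.add <;> apply Measurable.mul
    · exact measurable_eind (measurableSet_le (ENNReal.measurable_ofReal.comp measurable_fst)
        ((measurable_cdfE μ).comp measurable_snd))
    · exact measurable_eind (measurableSet_lt ((measurable_cdfE ν).comp measurable_snd)
        (ENNReal.measurable_ofReal.comp measurable_fst))
    · exact measurable_eind (measurableSet_le (ENNReal.measurable_ofReal.comp measurable_fst)
        ((measurable_cdfE ν).comp measurable_snd))
    · exact measurable_eind (measurableSet_lt ((measurable_cdfE μ).comp measurable_snd)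
        (ENNReal.measurable_ofReal.comp measurable_fst))
  rw [lintegral_lintegral_swap m1]
  apply lintegral_congr; intro s
  exact lintegral_omega_pair μ ν s s

end Master

section Mix

lemma mix_apply {ι : Type*} [Countable ι] (w : ι → ℝ≥0∞) (μs : ι → Measure ℝ) (s : ℝ) :
    (Measure.sum fun i => w i • μs i) (Iic s) = ∑' i, w i * μs i (Iic s) := by
  rw [Measure.sum_apply _ measurableSet_Iic]
  simp [Measure.smul_apply, smul_eq_mul]

lemma isProb_mix {ι : Type*} [Countable ι] (w : ι → ℝ≥0∞) (hw : ∑' i, w i = 1)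
    (μs : ι → Measure ℝ) (hμ : ∀ i, IsProbabilityMeasure (μs i)) :
    IsProbabilityMeasure (Measure.sum fun i => w i • μs i) := by
  constructor
  rw [Measure.sum_apply _ MeasurableSet.univ]
  have : ∀ i, (w i • μs i) univ = w i := by
    intro i
    haveI := hμ i
    simp [Measure.smul_apply, smul_eq_mul, measure_univ]
  rw [tsum_congr this, hw]

lemma tsum_tsub_le {ι : Type*} (f g : ι → ℝ≥0∞) :
    (∑' i, f i) - (∑' i, g i) ≤ ∑' i, (f i - g i) := by
  rw [tsub_le_iff_right, ← ENNReal.tsum_add]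
  exact Summable.tsum_le_tsum (fun i => le_tsub_add) ENNReal.summable ENNReal.summable

lemma mul_tsub_le {a b c : ℝ≥0∞} : a * b - a * c ≤ a * (b - c) := by
  rw [tsub_le_iff_right, ← mul_add]
  exact mul_le_mul_right le_tsub_add a

lemma Phi_mix_le {ι : Type*} [Countable ι] (w : ι → ℝ≥0∞) (μs νs : ι → Measure ℝ) (s t : ℝ) :
    Phi (Measure.sum fun i => w i • μs i) (Measure.sum fun i => w i • νs i) s t
      ≤ ∑' i, w i * Phi (μs i) (νs i) s t := by
  unfold Phi
  rw [mix_apply, mix_apply, mix_apply, mix_apply]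
  calc (∑' i, w i * μs i (Iic s)) - (∑' i, w i * νs i (Iic t))
        + ((∑' i, w i * νs i (Iic s)) - (∑' i, w i * μs i (Iic t)))
      ≤ (∑' i, (w i * μs i (Iic s) - w i * νs i (Iic t)))
        + ∑' i, (w i * νs i (Iic s) - w i * μs i (Iic t)) :=
        add_le_add (tsum_tsub_le _ _) (tsum_tsub_le _ _)
    _ = ∑' i, ((w i * μs i (Iic s) - w i * νs i (Iic t))
        + (w i * νs i (Iic s) - w i * μs i (Iic t))) := (ENNReal.tsum_add).symm
    _ ≤ ∑' i, w i * ((μs i (Iic s) - νs i (Iic t)) + (νs i (Iic s) - μs i (Iic t))) := by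
        apply Summable.tsum_le_tsum _ ENNReal.summable ENNReal.summable
        intro i
        rw [mul_add]
        exact add_le_add mul_tsub_le mul_tsub_le

lemma measurable_Phi (μ ν : Measure ℝ) [IsProbabilityMeasure μ] [IsProbabilityMeasure ν] :
    Measurable fun st : ℝ × ℝ => Phi μ ν st.1 st.2 := by
  unfold Phi
  apply Measurable.add <;> apply Measurable.sub
  · exact (measurable_cdfE μ).comp measurable_fst
  · exact (measurable_cdfE ν).comp measurable_snd
  · exact (measurable_cdfE ν).comp measurable_fst
  · exact (measurable_cdfE μ).comp measurable_snd

lemma w_ne_top {ι : Type*} [Countable ι] {w : ι → ℝ≥0∞} (hw : ∑' i, w i = 1) (i : ι) :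
    w i ≠ ∞ := by
  have h := ENNReal.le_tsum (f := w) i
  rw [hw] at h
  exact (h.trans_lt ENNReal.one_lt_top).ne

lemma mix_le {ι : Type*} [Countable ι] (w : ι → ℝ≥0∞) (hw : ∑' i, w i = 1)
    (μs νs : ι → Measure ℝ) (hμ : ∀ i, IsProbabilityMeasure (μs i))
    (hν : ∀ i, IsProbabilityMeasure (νs i)) {p : ℝ} (hp : 1 ≤ p) :
    ∫⁻ ω in Ioo (0:ℝ) 1, ENNReal.ofReal
        (|quantileFn (Measure.sum fun i => w i • μs i) ω -
          quantileFn (Measure.sum fun i => w i • νs i) ω| ^ p)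
      ≤ ∑' i, w i * ∫⁻ ω in Ioo (0:ℝ) 1,
          ENNReal.ofReal (|quantileFn (μs i) ω - quantileFn (νs i) ω| ^ p) := by
  haveI hM := isProb_mix w hw μs hμ
  haveI hN := isProb_mix w hw νs hν
  haveI := fun i => hμ i
  haveI := fun i => hν i
  rcases eq_or_lt_of_le hp with h1 | h1
  · -- p = 1
    simp only [← h1, Real.rpow_one]
    rw [master_one]
    have step1 : ∫⁻ s, Phi (Measure.sum fun i => w i • μs i)
        (Measure.sum fun i => w i • νs i) s s ≤ ∫⁻ s, ∑' i, w i * Phi (μs i) (νs i) s s :=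
      lintegral_mono fun s => Phi_mix_le w μs νs s s
    refine step1.trans (le_of_eq ?_)
    rw [lintegral_tsum]
    · apply tsum_congr; intro i
      rw [lintegral_const_mul' _ _ (w_ne_top hw i), master_one (μs i) (νs i)]
    · intro i
      exact (((measurable_Phi (μs i) (νs i)).comp
        (measurable_id.prodMk measurable_id)).const_mul (w i)).aemeasurable
  · -- p > 1
    rw [master_gt _ _ h1]
    have step1 : (∫⁻ s, ∫⁻ t, kern p s t * Phi (Measure.sum fun i => w i • μs i)
          (Measure.sum fun i => w i • νs i) s t)
        ≤ ∑' i, w i * ∫⁻ s, ∫⁻ t, kern p s t * Phi (μs i) (νs i) s t := by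
      have h2 : (∫⁻ s, ∫⁻ t, kern p s t * Phi (Measure.sum fun i => w i • μs i)
            (Measure.sum fun i => w i • νs i) s t)
          ≤ ∫⁻ s, ∫⁻ t, ∑' i, w i * (kern p s t * Phi (μs i) (νs i) s t) := by
        apply lintegral_mono; intro s
        apply lintegral_mono; intro t
        calc kern p s t * Phi (Measure.sum fun i => w i • μs i)
              (Measure.sum fun i => w i • νs i) s t
            ≤ kern p s t * ∑' i, w i * Phi (μs i) (νs i) s t :=
              mul_le_mul_right (Phi_mix_le w μs νs s t) _
          _ = ∑' i, w i * (kern p s t * Phi (μs i) (νs i) s t) := by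
              rw [ENNReal.tsum_mul_left.symm]
              apply tsum_congr; intro i; ring
      refine h2.trans (le_of_eq ?_)
      have minner : ∀ i, Measurable fun st : ℝ × ℝ =>
          w i * (kern p st.1 st.2 * Phi (μs i) (νs i) st.1 st.2) := fun i =>
        (((measurable_kern p).mul (measurable_Phi (μs i) (νs i))).const_mul (w i))
      have hswap : ∀ s : ℝ, (∫⁻ t, ∑' i, w i * (kern p s t * Phi (μs i) (νs i) s t))
          = ∑' i, ∫⁻ t, w i * (kern p s t * Phi (μs i) (νs i) s t) := by
        intro s
        rw [lintegral_tsum]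
        intro i
        exact ((minner i).comp (measurable_const.prodMk measurable_id)).aemeasurable
      rw [lintegral_congr hswap, lintegral_tsum]
      · apply tsum_congr; intro i
        have : ∀ s : ℝ, (∫⁻ t, w i * (kern p s t * Phi (μs i) (νs i) s t))
            = w i * ∫⁻ t, kern p s t * Phi (μs i) (νs i) s t := by
          intro s
          exact lintegral_const_mul' _ _ (w_ne_top hw i)
        rw [lintegral_congr this, lintegral_const_mul' _ _ (w_ne_top hw i)]
      · intro i
        exact (Measurable.lintegral_prod_right' (minner i)).aemeasurable
    calc ENNReal.ofReal (p * (p - 1)) * ∫⁻ s, ∫⁻ t, kern p s t *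
          Phi (Measure.sum fun i => w i • μs i) (Measure.sum fun i => w i • νs i) s t
        ≤ ENNReal.ofReal (p * (p - 1)) *
            ∑' i, w i * ∫⁻ s, ∫⁻ t, kern p s t * Phi (μs i) (νs i) s t :=
          mul_le_mul_right step1 _
      _ = ∑' i, w i * (ENNReal.ofReal (p * (p - 1)) *
            ∫⁻ s, ∫⁻ t, kern p s t * Phi (μs i) (νs i) s t) := by
          rw [ENNReal.tsum_mul_left.symm]
          apply tsum_congr; intro i; ring
      _ = ∑' i, w i * ∫⁻ ω in Ioo (0:ℝ) 1,
            ENNReal.ofReal (|quantileFn (μs i) ω - quantileFn (νs i) ω| ^ p) := by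
          apply tsum_congr; intro i
          rw [master_gt (μs i) (νs i) h1]

end Mix

section Affine

lemma quantile_map (μ : Measure ℝ) [IsProbabilityMeasure μ] {γ c : ℝ} (hγ : 0 < γ)
    {ω : ℝ} (h0 : 0 < ω) (h1 : ω < 1) :
    quantileFn (Measure.map (fun z : ℝ => c + γ * z) μ) ω = c + γ * quantileFn μ ω := by
  have hf : Measurable fun z : ℝ => c + γ * z := by fun_prop
  have hpre : ∀ y : ℝ, (fun z : ℝ => c + γ * z) ⁻¹' (Iic y) = Iic ((y - c) / γ) := by
    intro y
    ext z
    simp only [mem_preimage, mem_Iic]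
    rw [le_div_iff₀ hγ, mul_comm]
    constructor <;> intro h <;> linarith
  have hset : {y : ℝ | ω ≤ cdfFn (Measure.map (fun z : ℝ => c + γ * z) μ) y}
      = (fun z : ℝ => c + γ * z) '' {y : ℝ | ω ≤ cdfFn μ y} := by
    ext y
    have hy : cdfFn (Measure.map (fun z : ℝ => c + γ * z) μ) y = cdfFn μ ((y - c) / γ) := by
      unfold cdfFn
      rw [Measure.map_apply hf measurableSet_Iic, hpre]
    simp only [mem_setOf_eq, hy, mem_image]
    constructor
    · intro h
      exact ⟨(y - c) / γ, h, by field_simp; ring⟩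
    · rintro ⟨z, hz, rfl⟩
      have hzz : (c + γ * z - c) / γ = z := by field_simp; ring
      rwa [hzz]
  unfold quantileFn
  rw [hset]
  rw [← Monotone.map_csInf_of_continuousAt (f := fun z : ℝ => c + γ * z)
    (Continuous.continuousAt (by fun_prop))
    (fun x y hxy => by simp only; nlinarith)
    (S_nonempty μ h1) (S_bddBelow μ h0)]

lemma lintegral_map_pair (μ ν : Measure ℝ) [IsProbabilityMeasure μ] [IsProbabilityMeasure ν]
    {γ c p : ℝ} (hγ : 0 < γ) (hp : 1 ≤ p) :
    ∫⁻ ω in Ioo (0:ℝ) 1, ENNReal.ofReal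
        (|quantileFn (Measure.map (fun z : ℝ => c + γ * z) μ) ω -
          quantileFn (Measure.map (fun z : ℝ => c + γ * z) ν) ω| ^ p)
      = ENNReal.ofReal γ ^ p *
        ∫⁻ ω in Ioo (0:ℝ) 1, ENNReal.ofReal (|quantileFn μ ω - quantileFn ν ω| ^ p) := by
  have hcong : ∀ ω ∈ Ioo (0:ℝ) 1, ENNReal.ofReal
      (|quantileFn (Measure.map (fun z : ℝ => c + γ * z) μ) ω -
        quantileFn (Measure.map (fun z : ℝ => c + γ * z) ν) ω| ^ p)
      = ENNReal.ofReal γ ^ p * ENNReal.ofReal (|quantileFn μ ω - quantileFn ν ω| ^ p) := by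
    intro ω hω
    rw [quantile_map μ hγ hω.1 hω.2, quantile_map ν hγ hω.1 hω.2]
    have h1 : c + γ * quantileFn μ ω - (c + γ * quantileFn ν ω)
        = γ * (quantileFn μ ω - quantileFn ν ω) := by ring
    rw [h1, abs_mul, abs_of_pos hγ,
      Real.mul_rpow hγ.le (abs_nonneg _), ENNReal.ofReal_mul (Real.rpow_nonneg hγ.le p),
      ENNReal.ofReal_rpow_of_pos hγ]
  rw [setLIntegral_congr_fun measurableSet_Ioo hcong]
  rw [lintegral_const_mul' _ _
    (ENNReal.rpow_ne_top_of_nonneg (by linarith) ENNReal.ofReal_ne_top)]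

lemma WpE_lintegral_self (μ : Measure ℝ) {p : ℝ} (hp : 1 ≤ p) :
    (∫⁻ ω in Ioo (0:ℝ) 1,
      ENNReal.ofReal (|quantileFn μ ω - quantileFn μ ω| ^ p)) = 0 := by
  have : ∀ ω : ℝ, ENNReal.ofReal (|quantileFn μ ω - quantileFn μ ω| ^ p) = 0 := by
    intro ω
    rw [sub_self, abs_zero, Real.zero_rpow (by linarith), ENNReal.ofReal_zero]
  rw [lintegral_congr this]
  simp

end Affine

section Assemble

lemma sum_sum_eq {X A : Type*} [Countable X] [Countable A] (m : X → A → Measure ℝ) :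
    (Measure.sum fun x : X => Measure.sum fun a : A => m x a)
      = Measure.sum (fun i : X × A => m i.1 i.2) := by
  ext s hs
  rw [Measure.sum_apply _ hs, Measure.sum_apply _ hs, ENNReal.tsum_prod']
  exact tsum_congr fun x => Measure.sum_apply _ hs

lemma summable_of_tsum_one {ι : Type*} [Countable ι] {f : ι → ℝ} (h : ∑' i, f i = 1) :
    Summable f := by
  by_contra hs
  rw [tsum_eq_zero_of_not_summable hs] at h
  norm_num at h

end Assemble

end WassAux

open WassAux

/-- the distributional Bellman operator `T^π` is a `γ`-contraction in the maximal
p-Wasserstein metric `d̄_p(Z₁, Z₂) = sup_{x,a} W_p(Z₁(x,a), Z₂(x,a))`. -/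
theorem distBellman_contraction
    {X A : Type*} [Countable X] [Countable A] [Nonempty X] [Nonempty A]
    (P : X → A → X → ℝ) (hP01 : ∀ x a x', P x a x' ∈ Set.Icc (0:ℝ) 1)
    (hP : ∀ x a, ∑' x', P x a x' = 1)
    (π : X → A → ℝ) (hπ01 : ∀ x' a', π x' a' ∈ Set.Icc (0:ℝ) 1)
    (hπ : ∀ x', ∑' a', π x' a' = 1)
    (r : X → A → ℝ) (γ : ℝ) (hγ : γ ∈ Set.Ico (0:ℝ) 1)
    (p : ℝ) (hp : 1 ≤ p)
    (Z₁ Z₂ : X × A → Measure ℝ)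
    (hZ₁ : ∀ q, IsProbabilityMeasure (Z₁ q)) (hZ₂ : ∀ q, IsProbabilityMeasure (Z₂ q))
    (hm₁ : ∀ q, Integrable (fun z : ℝ => |z| ^ p) (Z₁ q))
    (hm₂ : ∀ q, Integrable (fun z : ℝ => |z| ^ p) (Z₂ q)) :
    (⨆ q : X × A, WpE p (distBellman P π r γ Z₁ q) (distBellman P π r γ Z₂ q))
      ≤ ENNReal.ofReal γ * ⨆ q : X × A, WpE p (Z₁ q) (Z₂ q) := by
  classical
  have hp0 : (0:ℝ) < p := by linarith
  apply iSup_le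
  intro q
  set d := ⨆ q : X × A, WpE p (Z₁ q) (Z₂ q) with hd
  rcases eq_or_lt_of_le hγ.1 with hγ0 | hγpos
  · -- γ = 0 : the two images coincide
    have hfc : (fun z : ℝ => r q.1 q.2 + γ * z) = fun _ : ℝ => r q.1 q.2 := by
      funext z; rw [← hγ0]; ring
    have hTT : distBellman P π r γ Z₁ q = distBellman P π r γ Z₂ q := by
      unfold distBellman
      congr 1
      funext x'
      congr 1
      funext a'
      congr 1
      haveI := hZ₁ (x', a'); haveI := hZ₂ (x', a')
      rw [hfc, Measure.map_const, Measure.map_const, measure_univ, measure_univ]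
    rw [hTT]
    have hzero : WpE p (distBellman P π r γ Z₂ q) (distBellman P π r γ Z₂ q) = 0 := by
      rw [WpE, WpE_lintegral_self _ hp, ENNReal.zero_rpow_of_pos (by positivity)]
    rw [hzero]
    exact zero_le
  · -- 0 < γ
    set c := r q.1 q.2 with hc
    set w : X × A → ℝ≥0∞ := fun i => ENNReal.ofReal (P q.1 q.2 i.1 * π i.1 i.2) with hwdef
    have hf : Measurable fun z : ℝ => c + γ * z := by fun_prop
    have hT1 : distBellman P π r γ Z₁ q
        = Measure.sum fun i : X × A => w i • Measure.map (fun z : ℝ => c + γ * z) (Z₁ i) := by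
      unfold distBellman
      exact sum_sum_eq fun x' a' =>
        ENNReal.ofReal (P q.1 q.2 x' * π x' a') •
          Measure.map (fun z : ℝ => c + γ * z) (Z₁ (x', a'))
    have hT2 : distBellman P π r γ Z₂ q
        = Measure.sum fun i : X × A => w i • Measure.map (fun z : ℝ => c + γ * z) (Z₂ i) := by
      unfold distBellman
      exact sum_sum_eq fun x' a' =>
        ENNReal.ofReal (P q.1 q.2 x' * π x' a') •
          Measure.map (fun z : ℝ => c + γ * z) (Z₂ (x', a'))
    have hw : ∑' i, w i = 1 := by
      rw [hwdef, ENNReal.tsum_prod']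
      have hx : ∀ x' : X, (∑' a' : A, ENNReal.ofReal (P q.1 q.2 x' * π x' a'))
          = ENNReal.ofReal (P q.1 q.2 x') := by
        intro x'
        have h1 : ∀ a' : A, ENNReal.ofReal (P q.1 q.2 x' * π x' a')
            = ENNReal.ofReal (P q.1 q.2 x') * ENNReal.ofReal (π x' a') := fun a' =>
          ENNReal.ofReal_mul (hP01 q.1 q.2 x').1
        rw [tsum_congr h1, ENNReal.tsum_mul_left,
          ← ENNReal.ofReal_tsum_of_nonneg (fun a' => (hπ01 x' a').1)
            (summable_of_tsum_one (hπ x')), hπ x']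
        simp
      rw [tsum_congr hx,
        ← ENNReal.ofReal_tsum_of_nonneg (fun x' => (hP01 q.1 q.2 x').1)
          (summable_of_tsum_one (hP q.1 q.2)), hP q.1 q.2]
      simp
    have hPM1 : ∀ i : X × A,
        IsProbabilityMeasure (Measure.map (fun z : ℝ => c + γ * z) (Z₁ i)) := by
      intro i; haveI := hZ₁ i; exact Measure.isProbabilityMeasure_map hf.aemeasurable
    have hPM2 : ∀ i : X × A,
        IsProbabilityMeasure (Measure.map (fun z : ℝ => c + γ * z) (Z₂ i)) := by
      intro i; haveI := hZ₂ i; exact Measure.isProbabilityMeasure_map hf.aemeasurable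
    have key := mix_le w hw _ _ hPM1 hPM2 hp
    have hterm : ∀ i : X × A, (∫⁻ ω in Set.Ioo (0:ℝ) 1, ENNReal.ofReal
          (|quantileFn (Measure.map (fun z : ℝ => c + γ * z) (Z₁ i)) ω -
            quantileFn (Measure.map (fun z : ℝ => c + γ * z) (Z₂ i)) ω| ^ p))
        ≤ (ENNReal.ofReal γ * d) ^ p := by
      intro i
      haveI := hZ₁ i; haveI := hZ₂ i
      rw [lintegral_map_pair (Z₁ i) (Z₂ i) hγpos hp]
      have h2 : (∫⁻ ω in Set.Ioo (0:ℝ) 1,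
          ENNReal.ofReal (|quantileFn (Z₁ i) ω - quantileFn (Z₂ i) ω| ^ p))
          = (WpE p (Z₁ i) (Z₂ i)) ^ p := by
        rw [WpE, one_div, ENNReal.rpow_inv_rpow (by linarith : p ≠ 0)]
      have hle : (∫⁻ ω in Set.Ioo (0:ℝ) 1,
          ENNReal.ofReal (|quantileFn (Z₁ i) ω - quantileFn (Z₂ i) ω| ^ p)) ≤ d ^ p := by
        rw [h2]
        exact ENNReal.rpow_le_rpow
          (le_iSup (fun q : X × A => WpE p (Z₁ q) (Z₂ q)) i) (by linarith)
      calc ENNReal.ofReal γ ^ p * ∫⁻ ω in Set.Ioo (0:ℝ) 1,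
            ENNReal.ofReal (|quantileFn (Z₁ i) ω - quantileFn (Z₂ i) ω| ^ p)
          ≤ ENNReal.ofReal γ ^ p * d ^ p := mul_le_mul_right hle _
        _ = (ENNReal.ofReal γ * d) ^ p :=
            (ENNReal.mul_rpow_of_nonneg _ _ (by linarith)).symm
    have hsum : (∫⁻ ω in Set.Ioo (0:ℝ) 1, ENNReal.ofReal
        (|quantileFn (distBellman P π r γ Z₁ q) ω -
          quantileFn (distBellman P π r γ Z₂ q) ω| ^ p))
        ≤ (ENNReal.ofReal γ * d) ^ p := by
      rw [hT1, hT2]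
      refine key.trans ?_
      calc (∑' i : X × A, w i * ∫⁻ ω in Set.Ioo (0:ℝ) 1, ENNReal.ofReal
            (|quantileFn (Measure.map (fun z : ℝ => c + γ * z) (Z₁ i)) ω -
              quantileFn (Measure.map (fun z : ℝ => c + γ * z) (Z₂ i)) ω| ^ p))
          ≤ ∑' i : X × A, w i * (ENNReal.ofReal γ * d) ^ p :=
            Summable.tsum_le_tsum (fun i => mul_le_mul_right (hterm i) _)
              ENNReal.summable ENNReal.summable
        _ = (ENNReal.ofReal γ * d) ^ p := by
            rw [ENNReal.tsum_mul_right, hw, one_mul]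
    rw [WpE]
    calc (∫⁻ ω in Set.Ioo (0:ℝ) 1, ENNReal.ofReal
          (|quantileFn (distBellman P π r γ Z₁ q) ω -
            quantileFn (distBellman P π r γ Z₂ q) ω| ^ p)) ^ (1 / p)
        ≤ ((ENNReal.ofReal γ * d) ^ p) ^ (1 / p) :=
          ENNReal.rpow_le_rpow hsum (by positivity)
      _ = ENNReal.ofReal γ * d := by
          rw [one_div, ENNReal.rpow_rpow_inv (by linarith : p ≠ 0)]
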